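/- Let A and B be abelian categories and L ⊣ R an adjunction with L : A ⥤ B additive, exact and conservative. Let T = R ∘ L be the associated monad on A with unit η : id_A → T, and for an object F of A let B^n(F) = T^{n+1}(F) be the cosimplicial bar object, with cofaces δ_i^n = T^i η T^{n−i} : T^n(F) → T^{n+1}(F) for 0 ≤ i ≤ n. Then the augmented cochain complex 0 → F →^{η_F} B^0(F) →^{d^0} B^1(F) →^{d^1} ⋯, whose differentials d^n are the alternating sums of the coface maps, is exact; equivalently, the augmentation from F into the cochain complex associated with the cosimplicial object B^•(F) is a quasi-isomorphism. -/

import Mathlib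

open CategoryTheory CategoryTheory.Limits

namespace Statement1

variable {A : Type*} {B : Type*} [Category A] [Category B]

/-- Iterates of the monad `T = L ⋙ R` applied to `F` : `pw L R F n = Tⁿ F`. -/
def pw (L : A ⥤ B) (R : B ⥤ A) (F : A) : ℕ → A
  | 0 => F
  | n + 1 => (L ⋙ R).obj (pw L R F n)

/-- The coface map `δᵢⁿ = Tⁱ η T^{n-i} : Tⁿ F ⟶ T^{n+1} F` of the cosimplicial bar object,
for `0 ≤ i ≤ n`, where `η` is the unit of the adjunction. -/
def coface (L : A ⥤ B) (R : B ⥤ A) (adj : L ⊣ R) (F : A) :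
    (n : ℕ) → (i : ℕ) → i ≤ n → (pw L R F n ⟶ pw L R F (n + 1))
  | n, 0, _ => adj.unit.app (pw L R F n)
  | n + 1, i + 1, h => (L ⋙ R).map (coface L R adj F n i (Nat.le_of_succ_le_succ h))

/-- The differential `dⁿ : Bⁿ(F) ⟶ B^{n+1}(F)` of the cochain complex associated with the
cosimplicial bar object `Bⁿ(F) = T^{n+1}(F)`: the alternating sum of the coface maps
`δᵢ^{n+1} : T^{n+1}F ⟶ T^{n+2}F`, `0 ≤ i ≤ n+1`. -/
noncomputable def dBar [Preadditive A] (L : A ⥤ B) (R : B ⥤ A) (adj : L ⊣ R) (F : A) (n : ℕ) :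
    pw L R F (n + 1) ⟶ pw L R F (n + 2) :=
  ∑ i : Fin (n + 2), ((-1 : ℤ) ^ (i : ℕ)) • coface L R adj F (n + 1) i (by omega)

section Aux

variable (L : A ⥤ B) (R : B ⥤ A) (adj : L ⊣ R) (F : A)

lemma coface_zero (n : ℕ) (h : 0 ≤ n) :
    coface L R adj F n 0 h = adj.unit.app (pw L R F n) := by
  cases n <;> rfl

lemma coface_succ (n i : ℕ) (h : i + 1 ≤ n + 1) :
    coface L R adj F (n + 1) (i + 1) h =
      (L ⋙ R).map (coface L R adj F n i (Nat.le_of_succ_le_succ h)) := rfl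

/-- The cosimplicial identity `δⱼ ∘ δᵢ = δᵢ ∘ δ_{j-1}` for `i < j`. -/
lemma coface_comp (n i j : ℕ) (hi : i ≤ n) (hj : j ≤ n + 1) (hij : i < j) :
    coface L R adj F n i hi ≫ coface L R adj F (n + 1) j hj =
      coface L R adj F n (j - 1) (by omega) ≫ coface L R adj F (n + 1) i (by omega) := by
  induction i generalizing n j with
  | zero =>
    obtain ⟨j', rfl⟩ : ∃ k, j = k + 1 := ⟨j - 1, by omega⟩
    rw [coface_zero, coface_succ]
    exact (adj.unit.naturality (coface L R adj F n j' (by omega))).symm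
  | succ i ih =>
    obtain ⟨m, rfl⟩ : ∃ m, n = m + 1 := ⟨n - 1, by omega⟩
    obtain ⟨j', rfl⟩ : ∃ k, j = k + 1 := ⟨j - 1, by omega⟩
    rw [coface_succ, coface_succ]
    erw [← Functor.map_comp]
    rw [ih m j' (by omega) (by omega) (by omega), Functor.map_comp]
    obtain ⟨j'', rfl⟩ : ∃ k, j' = k + 1 := ⟨j' - 1, by omega⟩
    rfl

variable [Preadditive A]

/-- Proof-free version of `coface`. -/
noncomputable def cofN (n i : ℕ) : pw L R F n ⟶ pw L R F (n + 1) :=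
  if h : i ≤ n then coface L R adj F n i h else 0

lemma cofN_eq (n i : ℕ) (h : i ≤ n) : cofN L R adj F n i = coface L R adj F n i h :=
  dif_pos h

lemma cofN_zero (n : ℕ) : cofN L R adj F n 0 = adj.unit.app (pw L R F n) := by
  rw [cofN_eq L R adj F n 0 (Nat.zero_le n), coface_zero]

lemma cofN_succ (n i : ℕ) (h : i ≤ n) :
    cofN L R adj F (n + 1) (i + 1) = (L ⋙ R).map (cofN L R adj F n i) := by
  rw [cofN_eq L R adj F (n + 1) (i + 1) (by omega), cofN_eq L R adj F n i h, coface_succ]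

lemma cofN_comp (n i j : ℕ) (hi : i ≤ n) (hj : j ≤ n + 1) (hij : i < j) :
    cofN L R adj F n i ≫ cofN L R adj F (n + 1) j =
      cofN L R adj F n (j - 1) ≫ cofN L R adj F (n + 1) i := by
  rw [cofN_eq L R adj F n i hi, cofN_eq L R adj F (n + 1) j hj,
    cofN_eq L R adj F n (j - 1) (by omega), cofN_eq L R adj F (n + 1) i (by omega)]
  exact coface_comp L R adj F n i j hi hj hij

lemma dBar_eq (n : ℕ) :
    dBar L R adj F n = ∑ i : Fin (n + 2), ((-1 : ℤ) ^ (i : ℕ)) • cofN L R adj F (n + 1) i := by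
  rw [dBar]
  refine Finset.sum_congr rfl fun i _ => ?_
  rw [cofN_eq L R adj F (n + 1) (i : ℕ) (by omega)]

/-- The augmented cochain complex maps: `cc 0 = η_F` and `cc (k+1) = dBar k`. -/
noncomputable def cc : (k : ℕ) → (pw L R F k ⟶ pw L R F (k + 1))
  | 0 => adj.unit.app F
  | k + 1 => dBar L R adj F k

lemma sum_cofN_eq_cc (k : ℕ) :
    (∑ i : Fin (k + 1), ((-1 : ℤ) ^ (i : ℕ)) • cofN L R adj F k i) = cc L R adj F k := by
  cases k with
  | zero =>
    rw [Fin.sum_univ_one]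
    simp only [Fin.val_zero, pow_zero, one_smul]
    rw [cofN_zero]
    rfl
  | succ k =>
    rw [← dBar_eq]
    rfl

/-- The swap involution used to show `d ∘ d = 0`. -/
def gsw (k : ℕ) : Fin (k + 2) × Fin (k + 3) → Fin (k + 2) × Fin (k + 3) := fun p =>
  if h : (p.1 : ℕ) < (p.2 : ℕ) then
    (⟨(p.2 : ℕ) - 1, by have := p.2.isLt; omega⟩, ⟨(p.1 : ℕ), by have := p.1.isLt; omega⟩)
  else
    (⟨(p.2 : ℕ), by have := p.1.isLt; omega⟩, ⟨(p.1 : ℕ) + 1, by have := p.1.isLt; omega⟩)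

lemma gsw_val_fst (k : ℕ) (p : Fin (k + 2) × Fin (k + 3)) :
    ((gsw k p).1 : ℕ) = if (p.1 : ℕ) < (p.2 : ℕ) then (p.2 : ℕ) - 1 else (p.2 : ℕ) := by
  unfold gsw
  split <;> rfl

lemma gsw_val_snd (k : ℕ) (p : Fin (k + 2) × Fin (k + 3)) :
    ((gsw k p).2 : ℕ) = if (p.1 : ℕ) < (p.2 : ℕ) then (p.1 : ℕ) else (p.1 : ℕ) + 1 := by
  unfold gsw
  split <;> rfl

lemma dd_main (k : ℕ) :
    ∑ p : Fin (k + 2) × Fin (k + 3),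
      ((-1 : ℤ) ^ ((p.2 : ℕ) + (p.1 : ℕ))) •
        (cofN L R adj F (k + 1) (p.1 : ℕ) ≫ cofN L R adj F (k + 2) (p.2 : ℕ)) = 0 := by
  apply Finset.sum_ninvolution (gsw k)
  · intro p
    have e1 := gsw_val_fst k p
    have e2 := gsw_val_snd k p
    by_cases h : (p.1 : ℕ) < (p.2 : ℕ)
    · rw [if_pos h] at e1 e2
      rw [e1, e2]
      rw [cofN_comp L R adj F (k + 1) (p.1 : ℕ) (p.2 : ℕ) (by have := p.1.isLt; omega)
        (by have := p.2.isLt; omega) h]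
      have hsign : ((-1 : ℤ) ^ ((p.1 : ℕ) + ((p.2 : ℕ) - 1))) =
          -((-1 : ℤ) ^ ((p.2 : ℕ) + (p.1 : ℕ))) := by
        have he : (p.2 : ℕ) + (p.1 : ℕ) = ((p.1 : ℕ) + ((p.2 : ℕ) - 1)) + 1 := by omega
        rw [he, pow_succ]
        ring
      rw [hsign, neg_smul]
      exact add_neg_cancel _
    · rw [if_neg h] at e1 e2
      rw [e1, e2]
      rw [cofN_comp L R adj F (k + 1) (p.2 : ℕ) ((p.1 : ℕ) + 1) (by omega)
        (by have := p.1.isLt; omega) (by omega)]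
      have hred : (p.1 : ℕ) + 1 - 1 = (p.1 : ℕ) := rfl
      rw [hred]
      have hsign : ((-1 : ℤ) ^ (((p.1 : ℕ) + 1) + (p.2 : ℕ))) =
          -((-1 : ℤ) ^ ((p.2 : ℕ) + (p.1 : ℕ))) := by
        have he : ((p.1 : ℕ) + 1) + (p.2 : ℕ) = ((p.2 : ℕ) + (p.1 : ℕ)) + 1 := by omega
        rw [he, pow_succ]
        ring
      rw [hsign, neg_smul]
      exact add_neg_cancel _
  · intro p _ he
    have e2 := gsw_val_snd k p
    rw [he] at e2
    split_ifs at e2 <;> omega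
  · intro p
    exact Finset.mem_univ _
  · intro p
    have e1 := gsw_val_fst k (gsw k p)
    have e2 := gsw_val_snd k (gsw k p)
    simp only [gsw_val_fst k p, gsw_val_snd k p] at e1 e2
    refine Prod.ext (Fin.ext ?_) (Fin.ext ?_)
    · rw [e1]
      have h1 := p.1.isLt
      have h2 := p.2.isLt
      split_ifs <;> omega
    · rw [e2]
      have h1 := p.1.isLt
      have h2 := p.2.isLt
      split_ifs <;> omega

lemma cc_w (k : ℕ) : cc L R adj F k ≫ cc L R adj F (k + 1) = 0 := by
  cases k with
  | zero =>
    show adj.unit.app F ≫ dBar L R adj F 0 = 0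
    rw [dBar_eq, Fin.sum_univ_two]
    simp only [Fin.val_zero, pow_zero, one_smul, Fin.val_one, pow_one, neg_one_smul]
    erw [Preadditive.comp_add, Preadditive.comp_neg]
    have h1 : adj.unit.app F ≫ cofN L R adj F (0 + 1) 1 =
        adj.unit.app F ≫ cofN L R adj F (0 + 1) 0 := by
      rw [cofN_succ L R adj F 0 0 le_rfl, cofN_zero, cofN_zero]
      exact (adj.unit.naturality (adj.unit.app (pw L R F 0))).symm
    rw [h1, add_neg_cancel]
  | succ k =>
    show dBar L R adj F k ≫ dBar L R adj F (k + 1) = 0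
    have main := dd_main L R adj F k
    rw [dBar_eq, dBar_eq, Preadditive.sum_comp]
    simp only [Preadditive.comp_sum, Preadditive.zsmul_comp, Preadditive.comp_zsmul,
      smul_smul, ← pow_add]
    rw [← Finset.sum_product', Finset.univ_product_univ]
    exact main

/-- The contracting homotopy `tmap n = ϵ_{L Tⁿ F} : L T^{n+1} F ⟶ L Tⁿ F`. -/
def tmap (n : ℕ) : L.obj (pw L R F (n + 1)) ⟶ L.obj (pw L R F n) :=
  adj.counit.app (L.obj (pw L R F n))

lemma tri (n : ℕ) :
    L.map (cofN L R adj F n 0) ≫ tmap L R adj F n = 𝟙 (L.obj (pw L R F n)) := by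
  rw [cofN_zero]
  exact adj.left_triangle_components (pw L R F n)

lemma tnat (n i : ℕ) (h : i ≤ n) :
    L.map (cofN L R adj F (n + 1) (i + 1)) ≫ tmap L R adj F (n + 1) =
      tmap L R adj F n ≫ L.map (cofN L R adj F n i) := by
  rw [cofN_succ L R adj F n i h]
  exact adj.counit.naturality (L.map (cofN L R adj F n i))

variable [Preadditive B] [L.Additive]

/-- The homotopy identity: `t ∘ L(c) + L(c) ∘ t = 1`. -/
lemma homotopy_id (k : ℕ) :
    tmap L R adj F k ≫ L.map (cc L R adj F k) +
      L.map (cc L R adj F (k + 1)) ≫ tmap L R adj F (k + 1) =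
        𝟙 (L.obj (pw L R F (k + 1))) := by
  have key : L.map (cc L R adj F (k + 1)) ≫ tmap L R adj F (k + 1) =
      𝟙 (L.obj (pw L R F (k + 1))) - tmap L R adj F k ≫ L.map (cc L R adj F k) := by
    show L.map (dBar L R adj F k) ≫ tmap L R adj F (k + 1) = _
    rw [dBar_eq, Functor.map_sum, Preadditive.sum_comp]
    simp only [Functor.map_zsmul, Preadditive.zsmul_comp]
    rw [Fin.sum_univ_succ]
    have h0 : ((-1 : ℤ) ^ (((0 : Fin (k + 2))) : ℕ)) •
        (L.map (cofN L R adj F (k + 1) (((0 : Fin (k + 2))) : ℕ)) ≫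
          tmap L R adj F (k + 1)) = 𝟙 (L.obj (pw L R F (k + 1))) := by
      simp only [Fin.val_zero, pow_zero, one_smul]
      exact tri L R adj F (k + 1)
    rw [h0]
    have hrest : ∀ i : Fin (k + 1),
        ((-1 : ℤ) ^ ((i.succ : Fin (k + 2)) : ℕ)) •
          (L.map (cofN L R adj F (k + 1) ((i.succ : Fin (k + 2)) : ℕ)) ≫
            tmap L R adj F (k + 1)) =
        -(tmap L R adj F k ≫ (((-1 : ℤ) ^ (i : ℕ)) •
          L.map (cofN L R adj F k (i : ℕ)))) := by
      intro i
      rw [Preadditive.comp_zsmul, Fin.val_succ, tnat L R adj F k i (by omega), pow_succ,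
        mul_comm, mul_smul, neg_one_smul]
    simp only [hrest]
    rw [Finset.sum_neg_distrib, ← Preadditive.comp_sum]
    have hs : (∑ i : Fin (k + 1), ((-1 : ℤ) ^ (i : ℕ)) •
        L.map (cofN L R adj F k (i : ℕ))) = L.map (cc L R adj F k) := by
      simp only [← Functor.map_zsmul, ← Functor.map_sum]
      rw [sum_cofN_eq_cc L R adj F k]
    rw [hs]
    abel
  rw [key]
  abel

end Aux

section Main

variable [Abelian A] [Abelian B] (L : A ⥤ B) (R : B ⥤ A) (adj : L ⊣ R)
  [L.Additive] [PreservesFiniteLimits L] [PreservesFiniteColimits L]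
  [L.ReflectsIsomorphisms] (F : A)

lemma isZero_reflect (X : A) (h : IsZero (L.obj X)) : IsZero X := by
  rw [IsZero.iff_id_eq_zero]
  have h0 : L.map (0 : X ⟶ X) = 𝟙 (L.obj X) := by
    rw [L.map_zero]
    exact h.eq_of_src _ _
  have : IsIso (L.map (0 : X ⟶ X)) := by rw [h0]; infer_instance
  have : IsIso (0 : X ⟶ X) := isIso_of_reflects_iso _ L
  rw [← IsIso.hom_inv_id (0 : X ⟶ X), zero_comp]

lemma reflect_exact (S : ShortComplex A) (h : (S.map L).Exact) : S.Exact := by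
  rw [S.leftHomologyData.exact_map_iff L] at h
  exact S.leftHomologyData.exact_iff.2 (isZero_reflect L _ h)

lemma SC_map_exact (k : ℕ) :
    ((ShortComplex.mk (cc L R adj F k) (cc L R adj F (k + 1)) (cc_w L R adj F k)).map L).Exact := by
  have H0 := homotopy_id L R adj F k
  have H1 := homotopy_id L R adj F (k + 1)
  have htk : tmap L R adj F k ≫ L.map (cc L R adj F k) =
      𝟙 _ - L.map (cc L R adj F (k + 1)) ≫ tmap L R adj F (k + 1) := by
    rw [← H0]; abel
  have htk1 : tmap L R adj F (k + 1) ≫ L.map (cc L R adj F (k + 1)) =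
      𝟙 _ - L.map (cc L R adj F (k + 2)) ≫ tmap L R adj F (k + 2) := by
    rw [← H1]; abel
  have ho : ShortComplex.Homotopy
      (𝟙 ((ShortComplex.mk (cc L R adj F k) (cc L R adj F (k + 1)) (cc_w L R adj F k)).map L))
      0 :=
    { h₀ := 𝟙 (L.obj (pw L R F k)) - L.map (cc L R adj F k) ≫ tmap L R adj F k
      h₁ := tmap L R adj F k
      h₂ := tmap L R adj F (k + 1)
      h₃ := 𝟙 (L.obj (pw L R F (k + 2))) - tmap L R adj F (k + 1) ≫ L.map (cc L R adj F (k + 1))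
      h₀_f := by
        show (𝟙 (L.obj (pw L R F k)) - L.map (cc L R adj F k) ≫ tmap L R adj F k) ≫
          L.map (cc L R adj F k) = 0
        rw [Preadditive.sub_comp, Category.id_comp, Category.assoc, htk, Preadditive.comp_sub,
          Category.comp_id, ← Functor.map_comp_assoc, cc_w, L.map_zero, zero_comp, sub_zero,
          sub_self]
      g_h₃ := by
        show L.map (cc L R adj F (k + 1)) ≫ (𝟙 (L.obj (pw L R F (k + 2))) -
          tmap L R adj F (k + 1) ≫ L.map (cc L R adj F (k + 1))) = 0
        rw [Preadditive.comp_sub, Category.comp_id, htk1, Preadditive.comp_sub, Category.comp_id,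
          ← Functor.map_comp_assoc, cc_w, L.map_zero, zero_comp, sub_zero, sub_self]
      comm₁ := by
        show 𝟙 (L.obj (pw L R F k)) =
          L.map (cc L R adj F k) ≫ tmap L R adj F k +
            (𝟙 (L.obj (pw L R F k)) - L.map (cc L R adj F k) ≫ tmap L R adj F k) +
            (0 : L.obj (pw L R F k) ⟶ L.obj (pw L R F k))
        abel
      comm₂ := by
        show 𝟙 (L.obj (pw L R F (k + 1))) =
          L.map (cc L R adj F (k + 1)) ≫ tmap L R adj F (k + 1) +
            tmap L R adj F k ≫ L.map (cc L R adj F k) +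
            (0 : L.obj (pw L R F (k + 1)) ⟶ L.obj (pw L R F (k + 1)))
        rw [← H0]
        abel
      comm₃ := by
        show 𝟙 (L.obj (pw L R F (k + 2))) =
          (𝟙 (L.obj (pw L R F (k + 2))) -
            tmap L R adj F (k + 1) ≫ L.map (cc L R adj F (k + 1))) +
            tmap L R adj F (k + 1) ≫ L.map (cc L R adj F (k + 1)) +
            (0 : L.obj (pw L R F (k + 2)) ⟶ L.obj (pw L R F (k + 2)))
        abel }
  rw [ShortComplex.exact_iff_isZero_homology, IsZero.iff_id_eq_zero]
  have hc := ShortComplex.Homotopy.homologyMap_congr ho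
  rw [ShortComplex.homologyMap_id, ShortComplex.homologyMap_zero] at hc
  exact hc

lemma SC_exact (k : ℕ) :
    (ShortComplex.mk (cc L R adj F k) (cc L R adj F (k + 1)) (cc_w L R adj F k)).Exact :=
  reflect_exact L _ (SC_map_exact L R adj F k)

end Main

/--
Let `A` and `B` be abelian categories and `adj : L ⊣ R` an adjunction with
`L : A ⥤ B` additive, exact (preserving finite limits and colimits) and conservative
(reflecting isomorphisms). Let `T = R ∘ L` be the associated monad with unit `η`, and for an
object `F` of `A` let `Bⁿ(F) = T^{n+1}(F)` be the cosimplicial bar object, with cofaces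
`δᵢⁿ = Tⁱ η T^{n-i}`. Then the augmented cochain complex
`0 → F → B⁰(F) → B¹(F) → ⋯`, whose differentials are the alternating sums of the coface maps,
is exact: the augmentation `η_F` is a monomorphism, the sequence is a complex (consecutive
composites vanish), and it is exact at each spot.
-/
theorem statement1 [Abelian A] [Abelian B] (L : A ⥤ B) (R : B ⥤ A) (adj : L ⊣ R)
    [L.Additive] [PreservesFiniteLimits L] [PreservesFiniteColimits L]
    [L.ReflectsIsomorphisms] (F : A) :
    Mono (adj.unit.app F) ∧
    (∃ w : (adj.unit.app F : F ⟶ pw L R F 1) ≫ dBar L R adj F 0 = 0,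
      (ShortComplex.mk _ _ w).Exact) ∧
    (∀ n : ℕ, ∃ w : dBar L R adj F n ≫ dBar L R adj F (n + 1) = 0,
      (ShortComplex.mk _ _ w).Exact) := by
  refine ⟨?_, ?_, ?_⟩
  · -- Mono (adj.unit.app F)
    have hsplit : IsSplitMono (L.map (adj.unit.app F)) :=
      IsSplitMono.mk' ⟨tmap L R adj F 0, adj.left_triangle_components F⟩
    have hmono : Mono (L.map (adj.unit.app F)) := inferInstance
    let S0 : ShortComplex A := ShortComplex.mk (0 : F ⟶ F) (adj.unit.app F) zero_comp
    have hmap : (S0.map L).Exact := by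
      rw [ShortComplex.exact_iff_mono _ (by exact L.map_zero _ _)]
      exact hmono
    have hS0 : S0.Exact := reflect_exact L S0 hmap
    exact (ShortComplex.exact_iff_mono S0 rfl).1 hS0
  · exact ⟨cc_w L R adj F 0, SC_exact L R adj F 0⟩
  · exact fun n => ⟨cc_w L R adj F (n + 1), SC_exact L R adj F (n + 1)⟩

end Statement1
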